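/- Let ε > 0 and t ∈ ℝ. Let x₁, …, x_{m+n} ∈ ℝ^D and additional points x_{m+n+1}, …, x_{m+n+ℓ} ∈ ℝ^D. With q_ε(x) = Σ_{i=1}^{m+n} k_ε(x,x_i), W_{ij} = k_ε(x_i,x_j)/(q_ε(x_i)q_ε(x_j)), D_{ii} = Σ_j W_{ij}, A = D⁻¹W, L = (A − I)/ε², and E ∈ ℝ^{(m+n+ℓ)×(m+n)} defined by E_{ij} = [k_ε(x_i,x_j)/(q_ε(x_i)q_ε(x_j))] / (Σ_{j'=1}^{m+n} k_ε(x_i,x_{j'})/(q_ε(x_i)q_ε(x_{j'}))), suppose v₀, …, v_{K−1} ∈ ℝ^{m+n} satisfy −L v_i = μ_i v_i with ε²μ_i ≠ 1 for each i. Define H = Σ_{i=0}^{K−1} e^{−μ_i t} v_i v_iᵀ ∈ ℝ^{(m+n)×(m+n)} and H* = E (Σ_{i=0}^{K−1} e^{−μ_i t} (1−ε²μ_i)^{−2} v_i v_iᵀ) Eᵀ ∈ ℝ^{(m+n+ℓ)×(m+n+ℓ)}. Then H*(i,j) = H(i,j) for all 1 ≤ i, j ≤ m+n. -/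

import Mathlib

open MeasureTheory

noncomputable section

/-- The Gaussian-like kernel `k_ε(x,y) = exp(-‖x-y‖²/(4ε²))`. -/
def gaussKer {D : ℕ} (ε : ℝ) (x y : EuclideanSpace ℝ (Fin D)) : ℝ :=
  Real.exp (-‖x - y‖ ^ 2 / (4 * ε ^ 2))

/-- The empirical degree `q_ε(x) = Σ_i k_ε(x, x_i)` of a point with respect to sample points. -/
def qDeg {D N : ℕ} (ε : ℝ) (x : Fin N → EuclideanSpace ℝ (Fin D))
    (p : EuclideanSpace ℝ (Fin D)) : ℝ :=
  ∑ i, gaussKer ε p (x i)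

/-- The kernel-normalized affinity matrix `W_{ij} = k_ε(x_i,x_j)/(q_ε(x_i) q_ε(x_j))`. -/
def Wmat {D N : ℕ} (ε : ℝ) (x : Fin N → EuclideanSpace ℝ (Fin D)) :
    Matrix (Fin N) (Fin N) ℝ :=
  Matrix.of fun i j => gaussKer ε (x i) (x j) / (qDeg ε x (x i) * qDeg ε x (x j))

/-- The row-stochastic matrix `A = D⁻¹ W` where `D_{ii} = Σ_j W_{ij}`. -/
def Amat {D N : ℕ} (ε : ℝ) (x : Fin N → EuclideanSpace ℝ (Fin D)) :
    Matrix (Fin N) (Fin N) ℝ :=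
  Matrix.of fun i j => Wmat ε x i j / ∑ l, Wmat ε x i l

/-- The kernel-normalized graph Laplacian `L = (A - I)/ε²`. -/
def Lmat {D N : ℕ} (ε : ℝ) (x : Fin N → EuclideanSpace ℝ (Fin D)) :
    Matrix (Fin N) (Fin N) ℝ :=
  (1 / ε ^ 2) • (Amat ε x - 1)

/-- The Nyström extension matrix `E ∈ ℝ^{(m+n+ℓ)×(m+n)}` built from the original `m+n` points
(the first `m+n` coordinates of `x`) and `ℓ` additional points. -/
def extMat {D m n ℓ : ℕ} (ε : ℝ) (x : Fin (m + n + ℓ) → EuclideanSpace ℝ (Fin D)) :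
    Matrix (Fin (m + n + ℓ)) (Fin (m + n)) ℝ :=
  Matrix.of fun i j =>
    (gaussKer ε (x i) (x (Fin.castAdd ℓ j)) /
      (qDeg ε (fun j' : Fin (m + n) => x (Fin.castAdd ℓ j')) (x i) *
        qDeg ε (fun j' : Fin (m + n) => x (Fin.castAdd ℓ j')) (x (Fin.castAdd ℓ j)))) /
    ∑ j' : Fin (m + n),
      gaussKer ε (x i) (x (Fin.castAdd ℓ j')) /
        (qDeg ε (fun j'' : Fin (m + n) => x (Fin.castAdd ℓ j'')) (x i) *
          qDeg ε (fun j'' : Fin (m + n) => x (Fin.castAdd ℓ j'')) (x (Fin.castAdd ℓ j')))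

/-- The Nyström extension `H* = E (Σ_i e^{-μ_i t}(1-ε²μ_i)⁻² v_i v_iᵀ) Eᵀ` of the
GL-GP covariance matrix `H = Σ_i e^{-μ_i t} v_i v_iᵀ` restricts to `H` on the original points. -/
theorem stmt9 {D m n ℓ K : ℕ} (ε t : ℝ) (hε : 0 < ε)
    (x : Fin (m + n + ℓ) → EuclideanSpace ℝ (Fin D))
    (μs : Fin K → ℝ) (v : Fin K → Fin (m + n) → ℝ)
    (hv : ∀ i, (-(Lmat ε (fun j : Fin (m + n) => x (Fin.castAdd ℓ j)))).mulVec (v i)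
      = μs i • v i)
    (hμ : ∀ i, ε ^ 2 * μs i ≠ 1) :
    ∀ i j : Fin (m + n),
      (extMat ε x *
        (∑ l, (Real.exp (-μs l * t) / (1 - ε ^ 2 * μs l) ^ 2) •
          Matrix.vecMulVec (v l) (v l)) *
        (extMat ε x).transpose) (Fin.castAdd ℓ i) (Fin.castAdd ℓ j)
      = (∑ l, Real.exp (-μs l * t) • Matrix.vecMulVec (v l) (v l)) i j := by
  intro i j
  set x' : Fin (m + n) → EuclideanSpace ℝ (Fin D) := fun j => x (Fin.castAdd ℓ j) with hx'
  set A : Matrix (Fin (m + n)) (Fin (m + n)) ℝ := Amat ε x' with hA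
  -- the extension matrix restricted to the original points is `A`
  have hE : ∀ (a b : Fin (m + n)), extMat ε x (Fin.castAdd ℓ a) b = A a b := fun a b => rfl
  -- eigenvector identity for `A`
  have hAv : ∀ l, A.mulVec (v l) = (1 - ε ^ 2 * μs l) • v l := by
    intro l
    have h := hv l
    have hε2 : (ε ^ 2 : ℝ) ≠ 0 := by positivity
    funext k
    have hk := congrFun h k
    simp only [Lmat, Matrix.neg_mulVec, Matrix.smul_mulVec, Matrix.sub_mulVec,
      Matrix.one_mulVec, Pi.neg_apply, Pi.smul_apply, Pi.sub_apply, smul_eq_mul] at hk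
    have : A.mulVec (v l) k = v l k - ε ^ 2 * (μs l * v l k) := by
      field_simp at hk
      linarith [hk]
    rw [this]
    simp only [Pi.smul_apply, smul_eq_mul]
    ring
  -- rank-one conjugation formula
  have hconj : ∀ (u : Fin (m + n) → ℝ),
      (A * Matrix.vecMulVec u u * A.transpose) i j = A.mulVec u i * A.mulVec u j := by
    intro u
    have h1 : (A * Matrix.vecMulVec u u * A.transpose) i j
        = ∑ b, (∑ a, A i a * (u a * u b)) * A j b := by
      simp [Matrix.mul_apply, Matrix.vecMulVec_apply, Matrix.transpose_apply]
    have h2 : ∀ b, (∑ a, A i a * (u a * u b)) * A j b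
        = (∑ a, A i a * u a) * (u b * A j b) := by
      intro b
      rw [Finset.sum_mul, Finset.sum_mul]
      exact Finset.sum_congr rfl fun a _ => by ring
    rw [h1, Finset.sum_congr rfl fun b _ => h2 b, ← Finset.mul_sum]
    simp only [Matrix.mulVec, dotProduct]
    congr 1
    exact Finset.sum_congr rfl fun b _ => mul_comm _ _
  -- replace `extMat` entries by `A` entries
  have hrestrict :
      (extMat ε x *
        (∑ l, (Real.exp (-μs l * t) / (1 - ε ^ 2 * μs l) ^ 2) •
          Matrix.vecMulVec (v l) (v l)) *
        (extMat ε x).transpose) (Fin.castAdd ℓ i) (Fin.castAdd ℓ j)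
      = (A *
        (∑ l, (Real.exp (-μs l * t) / (1 - ε ^ 2 * μs l) ^ 2) •
          Matrix.vecMulVec (v l) (v l)) *
        A.transpose) i j := rfl
  rw [hrestrict]
  rw [Matrix.mul_sum, Matrix.sum_mul]
  simp only [Matrix.mul_smul, Matrix.smul_mul, Matrix.sum_apply, Matrix.smul_apply,
    smul_eq_mul]
  refine Finset.sum_congr rfl fun l _ => ?_
  rw [hconj (v l), hAv l]
  have hne : (1 - ε ^ 2 * μs l) ≠ 0 := sub_ne_zero.mpr (Ne.symm (hμ l))
  simp only [Pi.smul_apply, smul_eq_mul, Matrix.vecMulVec_apply]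
  field_simp
  ring_nf
  have hne' : 1 - μs l * ε ^ 2 ≠ 0 := by rwa [mul_comm]
  rw [show -(μs l * ε ^ 2 * v l i * v l j * (1 - μs l * ε ^ 2)⁻¹) + v l i * v l j * (1 - μs l * ε ^ 2)⁻¹
      = v l i * v l j * ((1 - μs l * ε ^ 2) * (1 - μs l * ε ^ 2)⁻¹) by ring,
    mul_inv_cancel₀ hne', mul_one]
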